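/- In the setting of the differentiable synchronization theorem, for any f₁, f₂ ∈ Ω(R, W) and any δ > 0, the map Ψ(f)(m) := F(f(φ^{−1}(m)), ω(m)) satisfies ‖Ψ(f₁) − Ψ(f₂)‖_{C¹(δ)} ≤ (L_{F_x} + δ(L_{F_{xx}}‖Tφ^{−1}‖_∞ R + L_{F_{xz}}‖Dω‖_∞)) ‖f₁ − f₂‖_∞ + δ L_{F_x}‖Tφ^{−1}‖_∞ ‖Df₁ − Df₂‖_∞. In particular, if L_{F_x} < min{1, 1/‖Tφ^{−1}‖_∞}, then for δ₀ > 0 sufficiently small Ψ is a contraction of Ω(R, W) with respect to ‖·‖_{C¹(δ₀)}. -/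

import Mathlib

open Manifold
open Set ContinuousLinearMap

section Calc
variable {E G H : Type*} [NormedAddCommGroup E] [NormedSpace ℝ E]
  [NormedAddCommGroup G] [NormedSpace ℝ G] [NormedAddCommGroup H] [NormedSpace ℝ H]
  {F : E → G → H} {U : Set E} {V : Set G}

theorem aux_hasT (hF : ContDiffOn ℝ 2 (fun p : E × G => F p.1 p.2) (U ×ˢ V))
    (hU : IsOpen U) (hV : IsOpen V) {x : E} {z : G} (hx : x ∈ U) (hz : z ∈ V) :
    HasFDerivAt (fun p : E × G => F p.1 p.2) (fderiv ℝ (fun p : E × G => F p.1 p.2) (x, z)) (x, z) :=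
  ((hF.contDiffAt (((hU.prod hV).mem_nhds ⟨hx, hz⟩))).differentiableAt (by norm_num)).hasFDerivAt

theorem aux_hasS (hF : ContDiffOn ℝ 2 (fun p : E × G => F p.1 p.2) (U ×ˢ V))
    (hU : IsOpen U) (hV : IsOpen V) {x : E} {z : G} (hx : x ∈ U) (hz : z ∈ V) :
    HasFDerivAt (fderiv ℝ (fun p : E × G => F p.1 p.2))
      (fderiv ℝ (fderiv ℝ (fun p : E × G => F p.1 p.2)) (x, z)) (x, z) :=
  (((hF.contDiffAt (((hU.prod hV).mem_nhds ⟨hx, hz⟩))).fderiv_right (m := 1)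
    (by norm_num)).differentiableAt (by norm_num)).hasFDerivAt

theorem aux_partial_x (hF : ContDiffOn ℝ 2 (fun p : E × G => F p.1 p.2) (U ×ˢ V))
    (hU : IsOpen U) (hV : IsOpen V) {x : E} {z : G} (hx : x ∈ U) (hz : z ∈ V) :
    HasFDerivAt (fun x' => F x' z)
      ((fderiv ℝ (fun p : E × G => F p.1 p.2) (x, z)).comp (inl ℝ E G)) x :=
  (aux_hasT hF hU hV hx hz).comp (f := fun e : E => (e, z)) x (hasFDerivAt_prodMk_left x z)

theorem aux_symm (hF : ContDiffOn ℝ 2 (fun p : E × G => F p.1 p.2) (U ×ˢ V))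
    (hU : IsOpen U) (hV : IsOpen V) {x : E} {z : G} (hx : x ∈ U) (hz : z ∈ V)
    (v w : E × G) :
    fderiv ℝ (fderiv ℝ (fun p : E × G => F p.1 p.2)) (x, z) v w =
      fderiv ℝ (fderiv ℝ (fun p : E × G => F p.1 p.2)) (x, z) w v := by
  apply second_derivative_symmetric_of_eventually
  · filter_upwards [(hU.prod hV).mem_nhds (⟨hx, hz⟩ : (x,z) ∈ U ×ˢ V)] with p hp
    exact ((hF.contDiffAt ((hU.prod hV).mem_nhds hp)).differentiableAt (by norm_num)).hasFDerivAt
  · exact aux_hasS hF hU hV hx hz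

theorem aux_hasC_inr (hF : ContDiffOn ℝ 2 (fun p : E × G => F p.1 p.2) (U ×ˢ V))
    (hU : IsOpen U) (hV : IsOpen V) {x : E} {z : G} (hx : x ∈ U) (hz : z ∈ V) :
    HasFDerivAt (fun x' => (fderiv ℝ (fun p : E × G => F p.1 p.2) (x', z)).comp (inr ℝ E G))
      (((compL ℝ G (E × G) H).flip (inr ℝ E G)).comp
        ((fderiv ℝ (fderiv ℝ (fun p : E × G => F p.1 p.2)) (x, z)).comp (inl ℝ E G))) x :=
  ((compL ℝ G (E × G) H).flip (inr ℝ E G)).hasFDerivAt.comp x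
    ((aux_hasS hF hU hV hx hz).comp x (hasFDerivAt_prodMk_left x z))

theorem aux_hasCx_inl (hF : ContDiffOn ℝ 2 (fun p : E × G => F p.1 p.2) (U ×ˢ V))
    (hU : IsOpen U) (hV : IsOpen V) {x : E} {z : G} (hx : x ∈ U) (hz : z ∈ V) :
    HasFDerivAt (fun x' => (fderiv ℝ (fun p : E × G => F p.1 p.2) (x', z)).comp (inl ℝ E G))
      (((compL ℝ E (E × G) H).flip (inl ℝ E G)).comp
        ((fderiv ℝ (fderiv ℝ (fun p : E × G => F p.1 p.2)) (x, z)).comp (inl ℝ E G))) x :=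
  ((compL ℝ E (E × G) H).flip (inl ℝ E G)).hasFDerivAt.comp x
    ((aux_hasS hF hU hV hx hz).comp x (hasFDerivAt_prodMk_left x z))

theorem aux_hasCz_inl (hF : ContDiffOn ℝ 2 (fun p : E × G => F p.1 p.2) (U ×ˢ V))
    (hU : IsOpen U) (hV : IsOpen V) {x : E} {z : G} (hx : x ∈ U) (hz : z ∈ V) :
    HasFDerivAt (fun z' => (fderiv ℝ (fun p : E × G => F p.1 p.2) (x, z')).comp (inl ℝ E G))
      (((compL ℝ E (E × G) H).flip (inl ℝ E G)).comp
        ((fderiv ℝ (fderiv ℝ (fun p : E × G => F p.1 p.2)) (x, z)).comp (inr ℝ E G))) z :=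
  ((compL ℝ E (E × G) H).flip (inl ℝ E G)).hasFDerivAt.comp z
    ((aux_hasS hF hU hV hx hz).comp z (hasFDerivAt_prodMk_right x z))

end Calc

section CLM
variable {X Y Z W : Type*} [NormedAddCommGroup X] [NormedSpace ℝ X]
  [NormedAddCommGroup Y] [NormedSpace ℝ Y] [NormedAddCommGroup Z] [NormedSpace ℝ Z]
  [NormedAddCommGroup W] [NormedSpace ℝ W]

theorem clm_split (T : (Y × Z) →L[ℝ] W) (a : Y) (b : Z) :
    T (a, b) = T (a, 0) + T (0, b) := by
  rw [← map_add]; simp [Prod.mk_add_mk]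

theorem clm_decomp (T₁ T₂ : (Y × Z) →L[ℝ] W) (P₁ P₂ : X →L[ℝ] Y) (Q : X →L[ℝ] Z) :
    T₁.comp (P₁.prod Q) - T₂.comp (P₂.prod Q) =
      ((T₁.comp (inl ℝ Y Z)).comp (P₁ - P₂)
        + ((T₁.comp (inl ℝ Y Z)) - (T₂.comp (inl ℝ Y Z))).comp P₂)
        + ((T₁.comp (inr ℝ Y Z)) - (T₂.comp (inr ℝ Y Z))).comp Q := by
  ext u
  simp only [ContinuousLinearMap.coe_comp', Function.comp_apply, ContinuousLinearMap.prod_apply,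
    ContinuousLinearMap.add_apply, inl_apply, inr_apply,
    ContinuousLinearMap.coe_sub', Pi.sub_apply]
  rw [clm_split T₁ (P₁ u) (Q u), clm_split T₂ (P₂ u) (Q u)]
  have h : T₁ (P₁ u - P₂ u, 0) = T₁ (P₁ u, 0) - T₁ (P₂ u, 0) := by
    rw [← map_sub]; simp [Prod.mk_sub_mk]
  rw [h]; abel
end CLM

theorem est_main {X V Y Z W : Type*} [NormedAddCommGroup X] [NormedSpace ℝ X]
    [NormedAddCommGroup V] [NormedSpace ℝ V]
    [NormedAddCommGroup Y] [NormedSpace ℝ Y] [NormedAddCommGroup Z] [NormedSpace ℝ Z]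
    [NormedAddCommGroup W] [NormedSpace ℝ W]
    (T₁ T₂ : (Y × Z) →L[ℝ] W) (D₁ D₂ : V →L[ℝ] Y) (C : X →L[ℝ] V) (Q : X →L[ℝ] Z)
    {lx axx axz t1 r c nq : ℝ}
    (a1 : ‖T₁.comp (inl ℝ Y Z)‖ ≤ lx)
    (a2 : ‖T₁.comp (inl ℝ Y Z) - T₂.comp (inl ℝ Y Z)‖ ≤ axx)
    (a3 : ‖T₁.comp (inr ℝ Y Z) - T₂.comp (inr ℝ Y Z)‖ ≤ axz)
    (b1 : ‖D₁ - D₂‖ ≤ t1) (b2 : ‖D₂‖ ≤ r) (bc : ‖C‖ ≤ c) (bq : ‖Q‖ ≤ nq)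
    (h0 : 0 ≤ lx) (h1 : 0 ≤ t1) (h2 : 0 ≤ axx) (h3 : 0 ≤ r) (h4 : 0 ≤ axz) :
    ‖T₁.comp ((D₁.comp C).prod Q) - T₂.comp ((D₂.comp C).prod Q)‖ ≤
      lx * t1 * c + axx * r * c + axz * nq := by
  rw [clm_decomp]
  refine (norm_add_le _ _).trans (add_le_add ((norm_add_le _ _).trans (add_le_add ?_ ?_)) ?_)
  · have e : D₁.comp C - D₂.comp C = (D₁ - D₂).comp C := by rw [ContinuousLinearMap.sub_comp]
    rw [e]
    refine (opNorm_comp_le _ _).trans ?_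
    have hc : ‖(D₁ - D₂).comp C‖ ≤ t1 * c :=
      (opNorm_comp_le _ _).trans (mul_le_mul b1 bc (norm_nonneg _) h1)
    calc ‖T₁.comp (inl ℝ Y Z)‖ * ‖(D₁ - D₂).comp C‖ ≤ lx * (t1 * c) :=
          mul_le_mul a1 hc (norm_nonneg _) h0
      _ = lx * t1 * c := by ring
  · refine (opNorm_comp_le _ _).trans ?_
    have hc : ‖D₂.comp C‖ ≤ r * c :=
      (opNorm_comp_le _ _).trans (mul_le_mul b2 bc (norm_nonneg _) h3)
    calc ‖T₁.comp (inl ℝ Y Z) - T₂.comp (inl ℝ Y Z)‖ * ‖D₂.comp C‖ ≤ axx * (r * c) :=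
          mul_le_mul a2 hc (norm_nonneg _) h2
      _ = axx * r * c := by ring
  · exact (opNorm_comp_le _ _).trans (mul_le_mul a3 bq (norm_nonneg _) h4)


section Mfd
variable {𝕜 : Type*} [NontriviallyNormedField 𝕜]
  {E : Type*} [NormedAddCommGroup E] [NormedSpace 𝕜 E]
  {H : Type*} [TopologicalSpace H] {I : ModelWithCorners 𝕜 E H}
  {M : Type*} [TopologicalSpace M] [ChartedSpace H M]
  {E' : Type*} [NormedAddCommGroup E'] [NormedSpace 𝕜 E']
  {E'' : Type*} [NormedAddCommGroup E''] [NormedSpace 𝕜 E'']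

theorem HasMFDerivAt.prod_space {f : M → E'} {g : M → E''} {x : M}
    {f' : TangentSpace I x →L[𝕜] E'} {g' : TangentSpace I x →L[𝕜] E''}
    (hf : HasMFDerivAt I 𝓘(𝕜, E') f x f') (hg : HasMFDerivAt I 𝓘(𝕜, E'') g x g') :
    HasMFDerivAt I 𝓘(𝕜, E' × E'') (fun y => (f y, g y)) x (f'.prod g') :=
  ⟨hf.1.prodMk hg.1, HasFDerivWithinAt.prodMk hf.2 hg.2⟩
end Mfd

set_option maxHeartbeats 2000000 in
theorem stmt15_key {q N d : ℕ} {M : Type*} [TopologicalSpace M]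
    [ChartedSpace (EuclideanSpace ℝ (Fin q)) M] [IsManifold (𝓡 q) (⊤ : ℕ∞) M]
    [CompactSpace M] [Nonempty M]
    (φ : M ≃ₜ M) (hφinv : ContMDiff (𝓡 q) (𝓡 q) 1 φ.symm)
    (ω : M → EuclideanSpace ℝ (Fin d))
    (hω : ContMDiff (𝓡 q) (𝓘(ℝ, EuclideanSpace ℝ (Fin d))) 1 ω)
    (DN : Set (EuclideanSpace ℝ (Fin N))) (Dd : Set (EuclideanSpace ℝ (Fin d)))
    (hDN : IsOpen DN) (hDd : IsOpen Dd) (hωDd : ∀ m, ω m ∈ Dd)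
    (F : EuclideanSpace ℝ (Fin N) → EuclideanSpace ℝ (Fin d) → EuclideanSpace ℝ (Fin N))
    (hF : ContDiffOn ℝ 2
      (fun p : EuclideanSpace ℝ (Fin N) × EuclideanSpace ℝ (Fin d) => F p.1 p.2) (DN ×ˢ Dd))
    (W : Set (EuclideanSpace ℝ (Fin N))) (hWDN : W ⊆ DN) (hWconv : Convex ℝ W)
    (LFx LFxx LFxz nTφinv nDω R : ℝ)
    (hLFx : ∀ x ∈ W, ∀ m : M, ‖fderiv ℝ (fun x' => F x' (ω m)) x‖ ≤ LFx)
    (hLFxx : ∀ x ∈ W, ∀ m : M,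
      ‖fderiv ℝ (fun x' => fderiv ℝ (fun x'' => F x'' (ω m)) x') x‖ ≤ LFxx)
    (hLFxz : ∀ x ∈ W, ∀ m : M,
      ‖fderiv ℝ (fun z' => fderiv ℝ (fun x' => F x' z') x) (ω m)‖ ≤ LFxz)
    (hnTφinv : ∀ m : M, @Norm.norm (EuclideanSpace ℝ (Fin q) →L[ℝ] EuclideanSpace ℝ (Fin q)) _ (mfderiv (𝓡 q) (𝓡 q) φ.symm m) ≤ nTφinv)
    (hnDω : ∀ m : M, @Norm.norm (EuclideanSpace ℝ (Fin q) →L[ℝ] EuclideanSpace ℝ (Fin d)) _ (mfderiv (𝓡 q) (𝓘(ℝ, EuclideanSpace ℝ (Fin d))) ω m) ≤ nDω)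
    (f₁ f₂ : M → EuclideanSpace ℝ (Fin N))
    (hf₁ : ContMDiff (𝓡 q) (𝓘(ℝ, EuclideanSpace ℝ (Fin N))) 1 f₁)
    (hf₂ : ContMDiff (𝓡 q) (𝓘(ℝ, EuclideanSpace ℝ (Fin N))) 1 f₂)
    (hf₁W : ∀ m, f₁ m ∈ W) (hf₂W : ∀ m, f₂ m ∈ W)
    (hRf₁ : ∀ m, @Norm.norm (EuclideanSpace ℝ (Fin q) →L[ℝ] EuclideanSpace ℝ (Fin N)) _ (mfderiv (𝓡 q) (𝓘(ℝ, EuclideanSpace ℝ (Fin N))) f₁ m) ≤ R)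
    (hRf₂ : ∀ m, @Norm.norm (EuclideanSpace ℝ (Fin q) →L[ℝ] EuclideanSpace ℝ (Fin N)) _ (mfderiv (𝓡 q) (𝓘(ℝ, EuclideanSpace ℝ (Fin N))) f₂ m) ≤ R) :
    ((⨆ m : M, ‖F (f₁ (φ.symm m)) (ω m) - F (f₂ (φ.symm m)) (ω m)‖) ≤
      LFx * ⨆ m : M, ‖f₁ m - f₂ m‖) ∧
    ((⨆ m : M, @Norm.norm (EuclideanSpace ℝ (Fin q) →L[ℝ] EuclideanSpace ℝ (Fin N)) _ (mfderiv (𝓡 q) (𝓘(ℝ, EuclideanSpace ℝ (Fin N)))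
        (fun m' => F (f₁ (φ.symm m')) (ω m') - F (f₂ (φ.symm m')) (ω m')) m)) ≤
      (LFxx * nTφinv * R + LFxz * nDω) * (⨆ m : M, ‖f₁ m - f₂ m‖) +
        LFx * nTφinv * ⨆ m : M, @Norm.norm (EuclideanSpace ℝ (Fin q) →L[ℝ] EuclideanSpace ℝ (Fin N)) _ (mfderiv (𝓡 q) (𝓘(ℝ, EuclideanSpace ℝ (Fin N)))
          (fun m' => f₁ m' - f₂ m') m)) := by
  classical
  obtain ⟨m₀⟩ : Nonempty M := inferInstance
  have hLFx0 : 0 ≤ LFx := le_trans (norm_nonneg _) (hLFx _ (hf₁W m₀) m₀)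
  have hLFxx0 : 0 ≤ LFxx := le_trans (norm_nonneg (fderiv ℝ (fun x' => fderiv ℝ (fun x'' => F x'' (ω m₀)) x') (f₁ m₀))) (hLFxx _ (hf₁W m₀) m₀)
  have hLFxz0 : 0 ≤ LFxz := le_trans (norm_nonneg (fderiv ℝ (fun z' => fderiv ℝ (fun x' => F x' z') (f₁ m₀)) (ω m₀))) (hLFxz _ (hf₁W m₀) m₀)
  have hnT0 : 0 ≤ nTφinv := le_trans (norm_nonneg _) (hnTφinv m₀)
  have hnDω0 : 0 ≤ nDω := le_trans (norm_nonneg _) (hnDω m₀)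
  have hR0 : 0 ≤ R := le_trans (norm_nonneg _) (hRf₁ m₀)
  have hmf₁ : MDifferentiable (𝓡 q) (𝓘(ℝ, EuclideanSpace ℝ (Fin N))) f₁ := hf₁.mdifferentiable one_ne_zero
  have hmf₂ : MDifferentiable (𝓡 q) (𝓘(ℝ, EuclideanSpace ℝ (Fin N))) f₂ := hf₂.mdifferentiable one_ne_zero
  have hmφ : MDifferentiable (𝓡 q) (𝓡 q) φ.symm := hφinv.mdifferentiable one_ne_zero
  have hmω : MDifferentiable (𝓡 q) (𝓘(ℝ, EuclideanSpace ℝ (Fin d))) ω := hω.mdifferentiable one_ne_zero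
  have bdd0 : BddAbove (Set.range fun m : M => ‖f₁ m - f₂ m‖) := by
    have hc : Continuous fun m : M => ‖f₁ m - f₂ m‖ :=
      (hf₁.continuous.sub hf₂.continuous).norm
    simpa [Set.image_univ] using (isCompact_univ.image hc).bddAbove
  have hsubm : ∀ m : M, HasMFDerivAt (𝓡 q) (𝓘(ℝ, EuclideanSpace ℝ (Fin N))) (fun m' => f₁ m' - f₂ m') m
      ((by exact mfderiv (𝓡 q) (𝓘(ℝ, EuclideanSpace ℝ (Fin N))) f₁ m) -
        (by exact mfderiv (𝓡 q) (𝓘(ℝ, EuclideanSpace ℝ (Fin N))) f₂ m)) := fun m =>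
    (hmf₁ m).hasMFDerivAt.sub (hmf₂ m).hasMFDerivAt
  have bdd1 : BddAbove (Set.range fun m : M =>
      @Norm.norm (EuclideanSpace ℝ (Fin q) →L[ℝ] EuclideanSpace ℝ (Fin N)) _ (mfderiv (𝓡 q) (𝓘(ℝ, EuclideanSpace ℝ (Fin N))) (fun m' => f₁ m' - f₂ m') m)) := by
    refine ⟨R + R, ?_⟩
    rintro r ⟨m, rfl⟩
    show @Norm.norm (EuclideanSpace ℝ (Fin q) →L[ℝ] EuclideanSpace ℝ (Fin N)) _ (mfderiv (𝓡 q) (𝓘(ℝ, EuclideanSpace ℝ (Fin N))) (fun m' => f₁ m' - f₂ m') m) ≤ R + R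
    rw [(hsubm m).mfderiv]
    exact (norm_sub_le _ _).trans (add_le_add (hRf₁ m) (hRf₂ m))
  have hT0 : 0 ≤ ⨆ m : M, ‖f₁ m - f₂ m‖ :=
    le_trans (norm_nonneg _) (le_ciSup bdd0 m₀)
  have hT1 : 0 ≤ ⨆ m : M, @Norm.norm (EuclideanSpace ℝ (Fin q) →L[ℝ] EuclideanSpace ℝ (Fin N)) _ (mfderiv (𝓡 q) (𝓘(ℝ, EuclideanSpace ℝ (Fin N))) (fun m' => f₁ m' - f₂ m') m) :=
    le_trans (norm_nonneg _) (le_ciSup bdd1 m₀)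
  -- zeroth order estimate
  have key0 : ∀ m : M, ‖F (f₁ (φ.symm m)) (ω m) - F (f₂ (φ.symm m)) (ω m)‖ ≤
      LFx * ‖f₁ (φ.symm m) - f₂ (φ.symm m)‖ := by
    intro m
    have hbound : ∀ x ∈ W, ‖(fderiv ℝ (fun p : EuclideanSpace ℝ (Fin N) × EuclideanSpace ℝ (Fin d) => F p.1 p.2) (x, ω m)).comp (inl ℝ (EuclideanSpace ℝ (Fin N)) (EuclideanSpace ℝ (Fin d)))‖ ≤ LFx := by
      intro x hx
      rw [← (aux_partial_x hF hDN hDd (hWDN hx) (hωDd m)).fderiv]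
      exact hLFx x hx m
    exact Convex.norm_image_sub_le_of_norm_hasFDerivWithin_le
      (f := fun x => F x (ω m))
      (fun x hx => (aux_partial_x hF hDN hDd (hWDN hx) (hωDd m)).hasFDerivWithinAt)
      hbound hWconv (hf₂W (φ.symm m)) (hf₁W (φ.symm m))
  constructor
  · refine ciSup_le fun m => (key0 m).trans ?_
    exact mul_le_mul_of_nonneg_left (le_ciSup bdd0 (φ.symm m)) hLFx0
  · refine ciSup_le fun m => ?_
    show @Norm.norm (EuclideanSpace ℝ (Fin q) →L[ℝ] EuclideanSpace ℝ (Fin N)) _ (mfderiv (𝓡 q) (𝓘(ℝ, EuclideanSpace ℝ (Fin N)))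
        (fun m' => F (f₁ (φ.symm m')) (ω m') - F (f₂ (φ.symm m')) (ω m')) m) ≤
      (LFxx * nTφinv * R + LFxz * nDω) * (⨆ m : M, ‖f₁ m - f₂ m‖) +
        LFx * nTφinv * ⨆ m : M, @Norm.norm (EuclideanSpace ℝ (Fin q) →L[ℝ] EuclideanSpace ℝ (Fin N)) _ (mfderiv (𝓡 q) (𝓘(ℝ, EuclideanSpace ℝ (Fin N))) (fun m' => f₁ m' - f₂ m') m)
    have hx₁ : f₁ (φ.symm m) ∈ W := hf₁W (φ.symm m)
    have hx₂ : f₂ (φ.symm m) ∈ W := hf₂W (φ.symm m)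
    have hcomp₁ : HasMFDerivAt (𝓡 q) (𝓘(ℝ, EuclideanSpace ℝ (Fin N))) (fun m' => f₁ (φ.symm m')) m
        ((mfderiv (𝓡 q) (𝓘(ℝ, EuclideanSpace ℝ (Fin N))) f₁ (φ.symm m)).comp (mfderiv (𝓡 q) (𝓡 q) φ.symm m)) :=
      (hmf₁ (φ.symm m)).hasMFDerivAt.comp m (hmφ m).hasMFDerivAt
    have hcomp₂ : HasMFDerivAt (𝓡 q) (𝓘(ℝ, EuclideanSpace ℝ (Fin N))) (fun m' => f₂ (φ.symm m')) m
        ((mfderiv (𝓡 q) (𝓘(ℝ, EuclideanSpace ℝ (Fin N))) f₂ (φ.symm m)).comp (mfderiv (𝓡 q) (𝓡 q) φ.symm m)) :=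
      (hmf₂ (φ.symm m)).hasMFDerivAt.comp m (hmφ m).hasMFDerivAt
    have hg₁ : HasMFDerivAt (𝓡 q) (𝓘(ℝ, EuclideanSpace ℝ (Fin N) × EuclideanSpace ℝ (Fin d))) (fun m' => (f₁ (φ.symm m'), ω m')) m
        (((mfderiv (𝓡 q) (𝓘(ℝ, EuclideanSpace ℝ (Fin N))) f₁ (φ.symm m)).comp (mfderiv (𝓡 q) (𝓡 q) φ.symm m)).prod
          (mfderiv (𝓡 q) (𝓘(ℝ, EuclideanSpace ℝ (Fin d))) ω m)) :=
      hcomp₁.prod_space (hmω m).hasMFDerivAt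
    have hg₂ : HasMFDerivAt (𝓡 q) (𝓘(ℝ, EuclideanSpace ℝ (Fin N) × EuclideanSpace ℝ (Fin d))) (fun m' => (f₂ (φ.symm m'), ω m')) m
        (((mfderiv (𝓡 q) (𝓘(ℝ, EuclideanSpace ℝ (Fin N))) f₂ (φ.symm m)).comp (mfderiv (𝓡 q) (𝓡 q) φ.symm m)).prod
          (mfderiv (𝓡 q) (𝓘(ℝ, EuclideanSpace ℝ (Fin d))) ω m)) :=
      hcomp₂.prod_space (hmω m).hasMFDerivAt
    have hΨ₁ : HasMFDerivAt (𝓡 q) (𝓘(ℝ, EuclideanSpace ℝ (Fin N))) (fun m' => F (f₁ (φ.symm m')) (ω m')) m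
        ((fderiv ℝ (fun p : EuclideanSpace ℝ (Fin N) × EuclideanSpace ℝ (Fin d) => F p.1 p.2) (f₁ (φ.symm m), ω m)).comp
          (((mfderiv (𝓡 q) (𝓘(ℝ, EuclideanSpace ℝ (Fin N))) f₁ (φ.symm m)).comp (mfderiv (𝓡 q) (𝓡 q) φ.symm m)).prod
            (mfderiv (𝓡 q) (𝓘(ℝ, EuclideanSpace ℝ (Fin d))) ω m))) :=
      ((aux_hasT hF hDN hDd (hWDN hx₁) (hωDd m)).hasMFDerivAt).comp m hg₁
    have hΨ₂ : HasMFDerivAt (𝓡 q) (𝓘(ℝ, EuclideanSpace ℝ (Fin N))) (fun m' => F (f₂ (φ.symm m')) (ω m')) m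
        ((fderiv ℝ (fun p : EuclideanSpace ℝ (Fin N) × EuclideanSpace ℝ (Fin d) => F p.1 p.2) (f₂ (φ.symm m), ω m)).comp
          (((mfderiv (𝓡 q) (𝓘(ℝ, EuclideanSpace ℝ (Fin N))) f₂ (φ.symm m)).comp (mfderiv (𝓡 q) (𝓡 q) φ.symm m)).prod
            (mfderiv (𝓡 q) (𝓘(ℝ, EuclideanSpace ℝ (Fin d))) ω m))) :=
      ((aux_hasT hF hDN hDd (hWDN hx₂) (hωDd m)).hasMFDerivAt).comp m hg₂
    have hΨsub : HasMFDerivAt (𝓡 q) (𝓘(ℝ, EuclideanSpace ℝ (Fin N)))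
        (fun m' => F (f₁ (φ.symm m')) (ω m') - F (f₂ (φ.symm m')) (ω m')) m
        ((fderiv ℝ (fun p : EuclideanSpace ℝ (Fin N) × EuclideanSpace ℝ (Fin d) => F p.1 p.2) (f₁ (φ.symm m), ω m)).comp
          (((mfderiv (𝓡 q) (𝓘(ℝ, EuclideanSpace ℝ (Fin N))) f₁ (φ.symm m)).comp (mfderiv (𝓡 q) (𝓡 q) φ.symm m)).prod
            (mfderiv (𝓡 q) (𝓘(ℝ, EuclideanSpace ℝ (Fin d))) ω m)) -
         (fderiv ℝ (fun p : EuclideanSpace ℝ (Fin N) × EuclideanSpace ℝ (Fin d) => F p.1 p.2) (f₂ (φ.symm m), ω m)).comp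
          (((mfderiv (𝓡 q) (𝓘(ℝ, EuclideanSpace ℝ (Fin N))) f₂ (φ.symm m)).comp (mfderiv (𝓡 q) (𝓡 q) φ.symm m)).prod
            (mfderiv (𝓡 q) (𝓘(ℝ, EuclideanSpace ℝ (Fin d))) ω m))) := hΨ₁.sub hΨ₂
    rw [hΨsub.mfderiv]
    -- MVT facts
    have hA₁ : fderiv ℝ (fun x' => F x' (ω m)) (f₁ (φ.symm m)) =
        (fderiv ℝ (fun p : EuclideanSpace ℝ (Fin N) × EuclideanSpace ℝ (Fin d) => F p.1 p.2) (f₁ (φ.symm m), ω m)).comp (inl ℝ (EuclideanSpace ℝ (Fin N)) (EuclideanSpace ℝ (Fin d))) :=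
      (aux_partial_x hF hDN hDd (hWDN hx₁) (hωDd m)).fderiv
    have hA₂ : fderiv ℝ (fun x' => F x' (ω m)) (f₂ (φ.symm m)) =
        (fderiv ℝ (fun p : EuclideanSpace ℝ (Fin N) × EuclideanSpace ℝ (Fin d) => F p.1 p.2) (f₂ (φ.symm m), ω m)).comp (inl ℝ (EuclideanSpace ℝ (Fin N)) (EuclideanSpace ℝ (Fin d))) :=
      (aux_partial_x hF hDN hDd (hWDN hx₂) (hωDd m)).fderiv
    have ha1 : ‖(fderiv ℝ (fun p : EuclideanSpace ℝ (Fin N) × EuclideanSpace ℝ (Fin d) => F p.1 p.2) (f₁ (φ.symm m), ω m)).comp (inl ℝ (EuclideanSpace ℝ (Fin N)) (EuclideanSpace ℝ (Fin d)))‖ ≤ LFx := by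
      rw [← hA₁]; exact hLFx _ hx₁ m
    have ha2 : ‖(fderiv ℝ (fun p : EuclideanSpace ℝ (Fin N) × EuclideanSpace ℝ (Fin d) => F p.1 p.2) (f₁ (φ.symm m), ω m)).comp (inl ℝ (EuclideanSpace ℝ (Fin N)) (EuclideanSpace ℝ (Fin d))) -
        (fderiv ℝ (fun p : EuclideanSpace ℝ (Fin N) × EuclideanSpace ℝ (Fin d) => F p.1 p.2) (f₂ (φ.symm m), ω m)).comp (inl ℝ (EuclideanSpace ℝ (Fin N)) (EuclideanSpace ℝ (Fin d)))‖ ≤ LFxx * ‖f₁ (φ.symm m) - f₂ (φ.symm m)‖ := by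
      rw [← hA₁, ← hA₂]
      have hdiffg : ∀ x ∈ W, DifferentiableAt ℝ
          (fun x' => fderiv ℝ (fun x'' => F x'' (ω m)) x') x := by
        intro x hx
        have hev : (fun x' => fderiv ℝ (fun x'' => F x'' (ω m)) x') =ᶠ[nhds x]
            (fun x' => (fderiv ℝ (fun p : EuclideanSpace ℝ (Fin N) × EuclideanSpace ℝ (Fin d) => F p.1 p.2) (x', ω m)).comp (inl ℝ (EuclideanSpace ℝ (Fin N)) (EuclideanSpace ℝ (Fin d)))) := by
          filter_upwards [hDN.mem_nhds (hWDN hx)] with y hy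
          exact (aux_partial_x hF hDN hDd hy (hωDd m)).fderiv
        exact hev.differentiableAt_iff.mpr
          (aux_hasCx_inl hF hDN hDd (hWDN hx) (hωDd m)).differentiableAt
      exact Convex.norm_image_sub_le_of_norm_hasFDerivWithin_le
        (f := fun x' => fderiv ℝ (fun x'' => F x'' (ω m)) x')
        (fun x hx => (hdiffg x hx).hasFDerivAt.hasFDerivWithinAt)
        (fun x hx => hLFxx x hx m) hWconv hx₂ hx₁
    have ha3 : ‖(fderiv ℝ (fun p : EuclideanSpace ℝ (Fin N) × EuclideanSpace ℝ (Fin d) => F p.1 p.2) (f₁ (φ.symm m), ω m)).comp (inr ℝ (EuclideanSpace ℝ (Fin N)) (EuclideanSpace ℝ (Fin d))) -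
        (fderiv ℝ (fun p : EuclideanSpace ℝ (Fin N) × EuclideanSpace ℝ (Fin d) => F p.1 p.2) (f₂ (φ.symm m), ω m)).comp (inr ℝ (EuclideanSpace ℝ (Fin N)) (EuclideanSpace ℝ (Fin d)))‖ ≤ LFxz * ‖f₁ (φ.symm m) - f₂ (φ.symm m)‖ := by
      have hbound : ∀ x ∈ W,
          ‖((compL ℝ (EuclideanSpace ℝ (Fin d)) (EuclideanSpace ℝ (Fin N) × EuclideanSpace ℝ (Fin d)) (EuclideanSpace ℝ (Fin N))).flip (inr ℝ (EuclideanSpace ℝ (Fin N)) (EuclideanSpace ℝ (Fin d)))).comp ((fderiv ℝ (fderiv ℝ (fun p : EuclideanSpace ℝ (Fin N) × EuclideanSpace ℝ (Fin d) => F p.1 p.2)) (x, ω m)).comp (inl ℝ (EuclideanSpace ℝ (Fin N)) (EuclideanSpace ℝ (Fin d))))‖ ≤ LFxz := by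
        intro x hx
        have hsymm := aux_symm hF hDN hDd (hWDN hx) (hωDd m)
        have hL' : fderiv ℝ (fun z' => fderiv ℝ (fun x' => F x' z') x) (ω m) =
            ((compL ℝ (EuclideanSpace ℝ (Fin N)) (EuclideanSpace ℝ (Fin N) × EuclideanSpace ℝ (Fin d)) (EuclideanSpace ℝ (Fin N))).flip (inl ℝ (EuclideanSpace ℝ (Fin N)) (EuclideanSpace ℝ (Fin d)))).comp ((fderiv ℝ (fderiv ℝ (fun p : EuclideanSpace ℝ (Fin N) × EuclideanSpace ℝ (Fin d) => F p.1 p.2)) (x, ω m)).comp (inr ℝ (EuclideanSpace ℝ (Fin N)) (EuclideanSpace ℝ (Fin d)))) := by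
          have hev : (fun z' => fderiv ℝ (fun x' => F x' z') x) =ᶠ[nhds (ω m)]
              (fun z' => (fderiv ℝ (fun p : EuclideanSpace ℝ (Fin N) × EuclideanSpace ℝ (Fin d) => F p.1 p.2) (x, z')).comp (inl ℝ (EuclideanSpace ℝ (Fin N)) (EuclideanSpace ℝ (Fin d)))) := by
            filter_upwards [hDd.mem_nhds (hωDd m)] with y hy
            exact (aux_partial_x hF hDN hDd (hWDN hx) hy).fderiv
          rw [hev.fderiv_eq]
          exact (aux_hasCz_inl hF hDN hDd (hWDN hx) (hωDd m)).fderiv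
        have hnorm := hLFxz x hx m
        rw [hL'] at hnorm
        refine ContinuousLinearMap.opNorm_le_bound _ hLFxz0 fun u => ?_
        refine ContinuousLinearMap.opNorm_le_bound _ (by positivity) fun v => ?_
        have e1 : ((((compL ℝ (EuclideanSpace ℝ (Fin d)) (EuclideanSpace ℝ (Fin N) × EuclideanSpace ℝ (Fin d)) (EuclideanSpace ℝ (Fin N))).flip (inr ℝ (EuclideanSpace ℝ (Fin N)) (EuclideanSpace ℝ (Fin d)))).comp ((fderiv ℝ (fderiv ℝ (fun p : EuclideanSpace ℝ (Fin N) × EuclideanSpace ℝ (Fin d) => F p.1 p.2)) (x, ω m)).comp (inl ℝ (EuclideanSpace ℝ (Fin N)) (EuclideanSpace ℝ (Fin d))))) u) v =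
            (fderiv ℝ (fderiv ℝ (fun p : EuclideanSpace ℝ (Fin N) × EuclideanSpace ℝ (Fin d) => F p.1 p.2)) (x, ω m)) ((inl ℝ (EuclideanSpace ℝ (Fin N)) (EuclideanSpace ℝ (Fin d))) u) ((inr ℝ (EuclideanSpace ℝ (Fin N)) (EuclideanSpace ℝ (Fin d))) v) := rfl
        rw [e1, hsymm ((inl ℝ (EuclideanSpace ℝ (Fin N)) (EuclideanSpace ℝ (Fin d))) u) ((inr ℝ (EuclideanSpace ℝ (Fin N)) (EuclideanSpace ℝ (Fin d))) v)]
        have e2 : (fderiv ℝ (fderiv ℝ (fun p : EuclideanSpace ℝ (Fin N) × EuclideanSpace ℝ (Fin d) => F p.1 p.2)) (x, ω m)) ((inr ℝ (EuclideanSpace ℝ (Fin N)) (EuclideanSpace ℝ (Fin d))) v) ((inl ℝ (EuclideanSpace ℝ (Fin N)) (EuclideanSpace ℝ (Fin d))) u) =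
            ((((compL ℝ (EuclideanSpace ℝ (Fin N)) (EuclideanSpace ℝ (Fin N) × EuclideanSpace ℝ (Fin d)) (EuclideanSpace ℝ (Fin N))).flip (inl ℝ (EuclideanSpace ℝ (Fin N)) (EuclideanSpace ℝ (Fin d)))).comp ((fderiv ℝ (fderiv ℝ (fun p : EuclideanSpace ℝ (Fin N) × EuclideanSpace ℝ (Fin d) => F p.1 p.2)) (x, ω m)).comp (inr ℝ (EuclideanSpace ℝ (Fin N)) (EuclideanSpace ℝ (Fin d))))) v) u := rfl
        rw [e2]
        calc ‖((((compL ℝ (EuclideanSpace ℝ (Fin N)) (EuclideanSpace ℝ (Fin N) × EuclideanSpace ℝ (Fin d)) (EuclideanSpace ℝ (Fin N))).flip (inl ℝ (EuclideanSpace ℝ (Fin N)) (EuclideanSpace ℝ (Fin d)))).comp ((fderiv ℝ (fderiv ℝ (fun p : EuclideanSpace ℝ (Fin N) × EuclideanSpace ℝ (Fin d) => F p.1 p.2)) (x, ω m)).comp (inr ℝ (EuclideanSpace ℝ (Fin N)) (EuclideanSpace ℝ (Fin d))))) v) u‖ ≤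
            ‖(((compL ℝ (EuclideanSpace ℝ (Fin N)) (EuclideanSpace ℝ (Fin N) × EuclideanSpace ℝ (Fin d)) (EuclideanSpace ℝ (Fin N))).flip (inl ℝ (EuclideanSpace ℝ (Fin N)) (EuclideanSpace ℝ (Fin d)))).comp ((fderiv ℝ (fderiv ℝ (fun p : EuclideanSpace ℝ (Fin N) × EuclideanSpace ℝ (Fin d) => F p.1 p.2)) (x, ω m)).comp (inr ℝ (EuclideanSpace ℝ (Fin N)) (EuclideanSpace ℝ (Fin d))))) v‖ * ‖u‖ :=
              ContinuousLinearMap.le_opNorm _ _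
          _ ≤ (LFxz * ‖v‖) * ‖u‖ :=
              mul_le_mul_of_nonneg_right
                ((ContinuousLinearMap.le_opNorm _ v).trans
                  (mul_le_mul_of_nonneg_right hnorm (norm_nonneg v))) (norm_nonneg u)
          _ = LFxz * ‖u‖ * ‖v‖ := by ring
      exact Convex.norm_image_sub_le_of_norm_hasFDerivWithin_le
        (f := fun x => (fderiv ℝ (fun p : EuclideanSpace ℝ (Fin N) × EuclideanSpace ℝ (Fin d) => F p.1 p.2) (x, ω m)).comp (inr ℝ (EuclideanSpace ℝ (Fin N)) (EuclideanSpace ℝ (Fin d))))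
        (fun x hx => (aux_hasC_inr hF hDN hDd (hWDN hx) (hωDd m)).hasFDerivWithinAt)
        hbound hWconv hx₂ hx₁
    have hΔ : ‖f₁ (φ.symm m) - f₂ (φ.symm m)‖ ≤ ⨆ m : M, ‖f₁ m - f₂ m‖ := le_ciSup bdd0 (φ.symm m)
    refine le_trans (est_main (X := EuclideanSpace ℝ (Fin q)) (V := EuclideanSpace ℝ (Fin q)) (fderiv ℝ (fun p : EuclideanSpace ℝ (Fin N) × EuclideanSpace ℝ (Fin d) => F p.1 p.2) (f₁ (φ.symm m), ω m)) (fderiv ℝ (fun p : EuclideanSpace ℝ (Fin N) × EuclideanSpace ℝ (Fin d) => F p.1 p.2) (f₂ (φ.symm m), ω m))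
      (mfderiv (𝓡 q) (𝓘(ℝ, EuclideanSpace ℝ (Fin N))) f₁ (φ.symm m)) (mfderiv (𝓡 q) (𝓘(ℝ, EuclideanSpace ℝ (Fin N))) f₂ (φ.symm m))
      (mfderiv (𝓡 q) (𝓡 q) φ.symm m) (mfderiv (𝓡 q) (𝓘(ℝ, EuclideanSpace ℝ (Fin d))) ω m)
      ha1 ha2 ha3
      (by have h := le_ciSup bdd1 (φ.symm m)
          rw [(hsubm (φ.symm m)).mfderiv] at h
          exact h) (hRf₂ (φ.symm m)) (hnTφinv m) (hnDω m)
      hLFx0 hT1 (by positivity) hR0 (by positivity)) ?_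
    nlinarith [mul_le_mul_of_nonneg_left hΔ (mul_nonneg (mul_nonneg hLFxx0 hR0) hnT0),
      mul_le_mul_of_nonneg_left hΔ (mul_nonneg hLFxz0 hnDω0), hT1, hnT0, hLFx0]


set_option maxHeartbeats 1000000 in
/-- the `C¹(δ)` contraction estimate for
`Ψ(f)(m) := F (f (φ⁻¹ m)) (ω m)` on `Ω(R,W)`, and the resulting contraction
property for sufficiently small `δ₀` when `L_{F_x} < min {1, 1/‖Tφ⁻¹‖_∞}`. -/
theorem stmt15 {q N d : ℕ} {M : Type*} [TopologicalSpace M]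
    [ChartedSpace (EuclideanSpace ℝ (Fin q)) M] [IsManifold (𝓡 q) (⊤ : ℕ∞) M]
    [CompactSpace M] [Nonempty M]
    (φ : M ≃ₜ M) (hφ : ContMDiff (𝓡 q) (𝓡 q) 1 φ)
    (hφinv : ContMDiff (𝓡 q) (𝓡 q) 1 φ.symm)
    (ω : M → EuclideanSpace ℝ (Fin d))
    (hω : ContMDiff (𝓡 q) (𝓘(ℝ, EuclideanSpace ℝ (Fin d))) 1 ω)
    (DN : Set (EuclideanSpace ℝ (Fin N))) (Dd : Set (EuclideanSpace ℝ (Fin d)))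
    (hDN : IsOpen DN) (hDd : IsOpen Dd) (hωDd : ∀ m, ω m ∈ Dd)
    (F : EuclideanSpace ℝ (Fin N) → EuclideanSpace ℝ (Fin d) → EuclideanSpace ℝ (Fin N))
    (hF : ContDiffOn ℝ 2
      (fun p : EuclideanSpace ℝ (Fin N) × EuclideanSpace ℝ (Fin d) => F p.1 p.2) (DN ×ˢ Dd))
    (W : Set (EuclideanSpace ℝ (Fin N))) (hWDN : W ⊆ DN) (hWcp : IsCompact W)
    (hWconv : Convex ℝ W)
    (hinv : ∀ x ∈ W, ∀ m : M, F x (ω m) ∈ W)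
    (LFx LFxx LFxz nTφinv nDω R : ℝ) (hnTφpos : 0 < nTφinv) (hR : 0 < R)
    (hLFx : ∀ x ∈ W, ∀ m : M, ‖fderiv ℝ (fun x' => F x' (ω m)) x‖ ≤ LFx)
    (hLFxx : ∀ x ∈ W, ∀ m : M,
      ‖fderiv ℝ (fun x' => fderiv ℝ (fun x'' => F x'' (ω m)) x') x‖ ≤ LFxx)
    (hLFxz : ∀ x ∈ W, ∀ m : M,
      ‖fderiv ℝ (fun z' => fderiv ℝ (fun x' => F x' z') x) (ω m)‖ ≤ LFxz)
    (hnTφinv : ∀ m : M, @Norm.norm (EuclideanSpace ℝ (Fin q) →L[ℝ] EuclideanSpace ℝ (Fin q)) _ (mfderiv (𝓡 q) (𝓡 q) φ.symm m) ≤ nTφinv)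
    (hnDω : ∀ m : M, @Norm.norm (EuclideanSpace ℝ (Fin q) →L[ℝ] EuclideanSpace ℝ (Fin d)) _ (mfderiv (𝓡 q) (𝓘(ℝ, EuclideanSpace ℝ (Fin d))) ω m) ≤ nDω) :
    (∀ δ > (0:ℝ), ∀ f₁ f₂ : M → EuclideanSpace ℝ (Fin N),
      ContMDiff (𝓡 q) (𝓘(ℝ, EuclideanSpace ℝ (Fin N))) 1 f₁ →
      ContMDiff (𝓡 q) (𝓘(ℝ, EuclideanSpace ℝ (Fin N))) 1 f₂ →
      (∀ m, f₁ m ∈ W) → (∀ m, f₂ m ∈ W) →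
      (∀ m, @Norm.norm (EuclideanSpace ℝ (Fin q) →L[ℝ] EuclideanSpace ℝ (Fin N)) _ (mfderiv (𝓡 q) (𝓘(ℝ, EuclideanSpace ℝ (Fin N))) f₁ m) ≤ R) →
      (∀ m, @Norm.norm (EuclideanSpace ℝ (Fin q) →L[ℝ] EuclideanSpace ℝ (Fin N)) _ (mfderiv (𝓡 q) (𝓘(ℝ, EuclideanSpace ℝ (Fin N))) f₂ m) ≤ R) →
      (⨆ m : M, ‖F (f₁ (φ.symm m)) (ω m) - F (f₂ (φ.symm m)) (ω m)‖) +
        δ * (⨆ m : M, @Norm.norm (EuclideanSpace ℝ (Fin q) →L[ℝ] EuclideanSpace ℝ (Fin N)) _ (mfderiv (𝓡 q) (𝓘(ℝ, EuclideanSpace ℝ (Fin N)))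
              (fun m' => F (f₁ (φ.symm m')) (ω m') - F (f₂ (φ.symm m')) (ω m')) m)) ≤
        (LFx + δ * (LFxx * nTφinv * R + LFxz * nDω)) * (⨆ m : M, ‖f₁ m - f₂ m‖) +
          δ * LFx * nTφinv *
            ⨆ m : M, @Norm.norm (EuclideanSpace ℝ (Fin q) →L[ℝ] EuclideanSpace ℝ (Fin N)) _ (mfderiv (𝓡 q) (𝓘(ℝ, EuclideanSpace ℝ (Fin N)))
              (fun m' => f₁ m' - f₂ m') m)) ∧
    (LFx < min 1 (1 / nTφinv) →
      ∃ δ₀ > (0:ℝ), ∃ c₀ : ℝ, 0 < c₀ ∧ c₀ < 1 ∧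
        ∀ f₁ f₂ : M → EuclideanSpace ℝ (Fin N),
          ContMDiff (𝓡 q) (𝓘(ℝ, EuclideanSpace ℝ (Fin N))) 1 f₁ →
          ContMDiff (𝓡 q) (𝓘(ℝ, EuclideanSpace ℝ (Fin N))) 1 f₂ →
          (∀ m, f₁ m ∈ W) → (∀ m, f₂ m ∈ W) →
          (∀ m, @Norm.norm (EuclideanSpace ℝ (Fin q) →L[ℝ] EuclideanSpace ℝ (Fin N)) _ (mfderiv (𝓡 q) (𝓘(ℝ, EuclideanSpace ℝ (Fin N))) f₁ m) ≤ R) →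
          (∀ m, @Norm.norm (EuclideanSpace ℝ (Fin q) →L[ℝ] EuclideanSpace ℝ (Fin N)) _ (mfderiv (𝓡 q) (𝓘(ℝ, EuclideanSpace ℝ (Fin N))) f₂ m) ≤ R) →
          (⨆ m : M, ‖F (f₁ (φ.symm m)) (ω m) - F (f₂ (φ.symm m)) (ω m)‖) +
            δ₀ * (⨆ m : M, @Norm.norm (EuclideanSpace ℝ (Fin q) →L[ℝ] EuclideanSpace ℝ (Fin N)) _ (mfderiv (𝓡 q) (𝓘(ℝ, EuclideanSpace ℝ (Fin N)))
                  (fun m' => F (f₁ (φ.symm m')) (ω m') - F (f₂ (φ.symm m')) (ω m')) m)) ≤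
            c₀ * ((⨆ m : M, ‖f₁ m - f₂ m‖) +
              δ₀ * ⨆ m : M, @Norm.norm (EuclideanSpace ℝ (Fin q) →L[ℝ] EuclideanSpace ℝ (Fin N)) _ (mfderiv (𝓡 q) (𝓘(ℝ, EuclideanSpace ℝ (Fin N)))
                (fun m' => f₁ m' - f₂ m') m))) := by
  have P1 : ∀ δ > (0:ℝ), ∀ f₁ f₂ : M → EuclideanSpace ℝ (Fin N),
      ContMDiff (𝓡 q) (𝓘(ℝ, EuclideanSpace ℝ (Fin N))) 1 f₁ →
      ContMDiff (𝓡 q) (𝓘(ℝ, EuclideanSpace ℝ (Fin N))) 1 f₂ →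
      (∀ m, f₁ m ∈ W) → (∀ m, f₂ m ∈ W) →
      (∀ m, @Norm.norm (EuclideanSpace ℝ (Fin q) →L[ℝ] EuclideanSpace ℝ (Fin N)) _ (mfderiv (𝓡 q) (𝓘(ℝ, EuclideanSpace ℝ (Fin N))) f₁ m) ≤ R) →
      (∀ m, @Norm.norm (EuclideanSpace ℝ (Fin q) →L[ℝ] EuclideanSpace ℝ (Fin N)) _ (mfderiv (𝓡 q) (𝓘(ℝ, EuclideanSpace ℝ (Fin N))) f₂ m) ≤ R) →
      (⨆ m : M, ‖F (f₁ (φ.symm m)) (ω m) - F (f₂ (φ.symm m)) (ω m)‖) +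
        δ * (⨆ m : M, @Norm.norm (EuclideanSpace ℝ (Fin q) →L[ℝ] EuclideanSpace ℝ (Fin N)) _ (mfderiv (𝓡 q) (𝓘(ℝ, EuclideanSpace ℝ (Fin N)))
              (fun m' => F (f₁ (φ.symm m')) (ω m') - F (f₂ (φ.symm m')) (ω m')) m)) ≤
        (LFx + δ * (LFxx * nTφinv * R + LFxz * nDω)) * (⨆ m : M, ‖f₁ m - f₂ m‖) +
          δ * LFx * nTφinv *
            ⨆ m : M, @Norm.norm (EuclideanSpace ℝ (Fin q) →L[ℝ] EuclideanSpace ℝ (Fin N)) _ (mfderiv (𝓡 q) (𝓘(ℝ, EuclideanSpace ℝ (Fin N)))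
              (fun m' => f₁ m' - f₂ m') m) := by
    intro δ hδ f₁ f₂ hf₁ hf₂ hf₁W hf₂W hRf₁ hRf₂
    obtain ⟨h0, h1⟩ := stmt15_key φ hφinv ω hω DN Dd hDN hDd hωDd F hF W hWDN hWconv
      LFx LFxx LFxz nTφinv nDω R hLFx hLFxx hLFxz hnTφinv hnDω
      f₁ f₂ hf₁ hf₂ hf₁W hf₂W hRf₁ hRf₂
    have h2 : δ * (⨆ m : M, @Norm.norm (EuclideanSpace ℝ (Fin q) →L[ℝ] EuclideanSpace ℝ (Fin N)) _ (mfderiv (𝓡 q) (𝓘(ℝ, EuclideanSpace ℝ (Fin N)))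
          (fun m' => F (f₁ (φ.symm m')) (ω m') - F (f₂ (φ.symm m')) (ω m')) m)) ≤
        δ * ((LFxx * nTφinv * R + LFxz * nDω) * (⨆ m : M, ‖f₁ m - f₂ m‖) +
          LFx * nTφinv * ⨆ m : M, @Norm.norm (EuclideanSpace ℝ (Fin q) →L[ℝ] EuclideanSpace ℝ (Fin N)) _ (mfderiv (𝓡 q) (𝓘(ℝ, EuclideanSpace ℝ (Fin N)))
            (fun m' => f₁ m' - f₂ m') m)) :=
      mul_le_mul_of_nonneg_left h1 hδ.le
    calc (⨆ m : M, ‖F (f₁ (φ.symm m)) (ω m) - F (f₂ (φ.symm m)) (ω m)‖) +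
        δ * (⨆ m : M, @Norm.norm (EuclideanSpace ℝ (Fin q) →L[ℝ] EuclideanSpace ℝ (Fin N)) _ (mfderiv (𝓡 q) (𝓘(ℝ, EuclideanSpace ℝ (Fin N)))
              (fun m' => F (f₁ (φ.symm m')) (ω m') - F (f₂ (φ.symm m')) (ω m')) m)) ≤
        LFx * (⨆ m : M, ‖f₁ m - f₂ m‖) +
          δ * ((LFxx * nTφinv * R + LFxz * nDω) * (⨆ m : M, ‖f₁ m - f₂ m‖) +
            LFx * nTφinv * ⨆ m : M, @Norm.norm (EuclideanSpace ℝ (Fin q) →L[ℝ] EuclideanSpace ℝ (Fin N)) _ (mfderiv (𝓡 q) (𝓘(ℝ, EuclideanSpace ℝ (Fin N)))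
              (fun m' => f₁ m' - f₂ m') m)) := add_le_add h0 h2
      _ = (LFx + δ * (LFxx * nTφinv * R + LFxz * nDω)) * (⨆ m : M, ‖f₁ m - f₂ m‖) +
          δ * LFx * nTφinv *
            ⨆ m : M, @Norm.norm (EuclideanSpace ℝ (Fin q) →L[ℝ] EuclideanSpace ℝ (Fin N)) _ (mfderiv (𝓡 q) (𝓘(ℝ, EuclideanSpace ℝ (Fin N)))
              (fun m' => f₁ m' - f₂ m') m) := by ring
  refine ⟨P1, ?_⟩
  intro hlt
  have hLFx1 : LFx < 1 := lt_of_lt_of_le hlt (min_le_left _ _)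
  have hLFx2 : LFx < 1 / nTφinv := lt_of_lt_of_le hlt (min_le_right _ _)
  set K := LFxx * nTφinv * R + LFxz * nDω with hK
  set δ₀ := min 1 ((1 - LFx) / (|K| + 1)) with hδ₀
  have hδ₀pos : 0 < δ₀ := lt_min one_pos (div_pos (by linarith) (by positivity))
  have hA1 : LFx + δ₀ * K < 1 := by
    have hd2 : δ₀ ≤ (1 - LFx) / (|K| + 1) := min_le_right _ _
    have e1 : δ₀ * K ≤ δ₀ * |K| := mul_le_mul_of_nonneg_left (le_abs_self K) hδ₀pos.le
    have e2 : δ₀ * |K| ≤ (1 - LFx) / (|K| + 1) * |K| :=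
      mul_le_mul_of_nonneg_right hd2 (abs_nonneg K)
    have e3 : (1 - LFx) / (|K| + 1) * |K| < 1 - LFx := by
      rw [div_mul_eq_mul_div, div_lt_iff₀ (by positivity)]
      nlinarith [abs_nonneg K]
    linarith
  have hB1 : LFx * nTφinv < 1 := by
    calc LFx * nTφinv < (1 / nTφinv) * nTφinv :=
          mul_lt_mul_of_pos_right hLFx2 hnTφpos
      _ = 1 := by field_simp
  set c₀ := max (max (LFx + δ₀ * K) (LFx * nTφinv)) (1/2 : ℝ) with hc₀
  have hc₀pos : 0 < c₀ := lt_of_lt_of_le (by norm_num) (le_max_right _ _)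
  have hc₀lt1 : c₀ < 1 := max_lt (max_lt hA1 hB1) (by norm_num)
  refine ⟨δ₀, hδ₀pos, c₀, hc₀pos, hc₀lt1, ?_⟩
  intro f₁ f₂ hf₁ hf₂ hf₁W hf₂W hRf₁ hRf₂
  have h := P1 δ₀ hδ₀pos f₁ f₂ hf₁ hf₂ hf₁W hf₂W hRf₁ hRf₂
  have T0nn : 0 ≤ ⨆ m : M, ‖f₁ m - f₂ m‖ := Real.iSup_nonneg fun m => norm_nonneg _
  have T1nn : 0 ≤ ⨆ m : M, @Norm.norm (EuclideanSpace ℝ (Fin q) →L[ℝ] EuclideanSpace ℝ (Fin N)) _ (mfderiv (𝓡 q) (𝓘(ℝ, EuclideanSpace ℝ (Fin N)))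
      (fun m' => f₁ m' - f₂ m') m) := Real.iSup_nonneg fun m => norm_nonneg _
  refine h.trans ?_
  have hAc : LFx + δ₀ * K ≤ c₀ := (le_max_left _ _).trans (le_max_left _ _)
  have hBc : LFx * nTφinv ≤ c₀ := (le_max_right _ _).trans (le_max_left _ _)
  have q1 : (LFx + δ₀ * K) * (⨆ m : M, ‖f₁ m - f₂ m‖) ≤ c₀ * ⨆ m : M, ‖f₁ m - f₂ m‖ :=
    mul_le_mul_of_nonneg_right hAc T0nn
  have q2 : δ₀ * LFx * nTφinv * (⨆ m : M, @Norm.norm (EuclideanSpace ℝ (Fin q) →L[ℝ] EuclideanSpace ℝ (Fin N)) _ (mfderiv (𝓡 q) (𝓘(ℝ, EuclideanSpace ℝ (Fin N)))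
        (fun m' => f₁ m' - f₂ m') m)) ≤
      δ₀ * c₀ * ⨆ m : M, @Norm.norm (EuclideanSpace ℝ (Fin q) →L[ℝ] EuclideanSpace ℝ (Fin N)) _ (mfderiv (𝓡 q) (𝓘(ℝ, EuclideanSpace ℝ (Fin N)))
        (fun m' => f₁ m' - f₂ m') m) := by
    have : δ₀ * (LFx * nTφinv) ≤ δ₀ * c₀ := mul_le_mul_of_nonneg_left hBc hδ₀pos.le
    have := mul_le_mul_of_nonneg_right this T1nn
    calc δ₀ * LFx * nTφinv * (⨆ m : M, @Norm.norm (EuclideanSpace ℝ (Fin q) →L[ℝ] EuclideanSpace ℝ (Fin N)) _ (mfderiv (𝓡 q) (𝓘(ℝ, EuclideanSpace ℝ (Fin N)))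
        (fun m' => f₁ m' - f₂ m') m)) = δ₀ * (LFx * nTφinv) * (⨆ m : M,
          @Norm.norm (EuclideanSpace ℝ (Fin q) →L[ℝ] EuclideanSpace ℝ (Fin N)) _ (mfderiv (𝓡 q) (𝓘(ℝ, EuclideanSpace ℝ (Fin N))) (fun m' => f₁ m' - f₂ m') m)) := by
            ring
      _ ≤ δ₀ * c₀ * ⨆ m : M, @Norm.norm (EuclideanSpace ℝ (Fin q) →L[ℝ] EuclideanSpace ℝ (Fin N)) _ (mfderiv (𝓡 q) (𝓘(ℝ, EuclideanSpace ℝ (Fin N)))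
          (fun m' => f₁ m' - f₂ m') m) := this
  calc (LFx + δ₀ * K) * (⨆ m : M, ‖f₁ m - f₂ m‖) +
      δ₀ * LFx * nTφinv * (⨆ m : M, @Norm.norm (EuclideanSpace ℝ (Fin q) →L[ℝ] EuclideanSpace ℝ (Fin N)) _ (mfderiv (𝓡 q) (𝓘(ℝ, EuclideanSpace ℝ (Fin N)))
        (fun m' => f₁ m' - f₂ m') m)) ≤
      c₀ * (⨆ m : M, ‖f₁ m - f₂ m‖) +
        δ₀ * c₀ * ⨆ m : M, @Norm.norm (EuclideanSpace ℝ (Fin q) →L[ℝ] EuclideanSpace ℝ (Fin N)) _ (mfderiv (𝓡 q) (𝓘(ℝ, EuclideanSpace ℝ (Fin N)))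
          (fun m' => f₁ m' - f₂ m') m) := add_le_add q1 q2
    _ = c₀ * ((⨆ m : M, ‖f₁ m - f₂ m‖) +
        δ₀ * ⨆ m : M, @Norm.norm (EuclideanSpace ℝ (Fin q) →L[ℝ] EuclideanSpace ℝ (Fin N)) _ (mfderiv (𝓡 q) (𝓘(ℝ, EuclideanSpace ℝ (Fin N)))
          (fun m' => f₁ m' - f₂ m') m)) := by ring
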